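/- Let θ be such that cos θ is transcendental over ℚ, and let A, B ∈ SO(4) be the block rotations A = diag(R(θ), R(θ)) (rotation by θ in the (1,2)-plane and in the (3,4)-plane) and B the rotation by θ in the (1,4)-plane and the (2,3)-plane as given. Then every element U ≠ I of the group generated by A and B has 0 as its only fixed point, i.e., 1 is not an eigenvalue of U. -/

import Mathlib

open Matrix Real

/-- The rotation `A = diag(R(θ), R(θ))`. -/
noncomputable def matA (θ : ℝ) : Matrix (Fin 4) (Fin 4) ℝ :=
  !![cos θ, -sin θ, 0, 0;
     sin θ,  cos θ, 0, 0;
     0, 0, cos θ, -sin θ;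
     0, 0, sin θ,  cos θ]

/-- The rotation `B` by θ in the (1,4)- and (2,3)-planes. -/
noncomputable def matB (θ : ℝ) : Matrix (Fin 4) (Fin 4) ℝ :=
  !![cos θ, 0, 0, -sin θ;
     0, cos θ, -sin θ, 0;
     0, sin θ,  cos θ, 0;
     sin θ, 0, 0,  cos θ]

/-- The matrix of left multiplication by a quaternion. -/
noncomputable def quatMat (u : Quaternion ℝ) : Matrix (Fin 4) (Fin 4) ℝ :=
  !![u.re, -u.imI, -u.imJ, -u.imK;
     u.imI, u.re, -u.imK, u.imJ;
     u.imJ, u.imK, u.re, -u.imI;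
     u.imK, -u.imJ, u.imI, u.re]

lemma quatMat_one : quatMat 1 = 1 := by
  ext i j
  fin_cases i <;> fin_cases j <;> simp [quatMat, Matrix.one_apply, Matrix.vecHead, Matrix.vecTail, Quaternion.re_one, Quaternion.imI_one, Quaternion.imJ_one, Quaternion.imK_one]

lemma quatMat_mul (u v : Quaternion ℝ) :
    quatMat (u * v) = quatMat u * quatMat v := by
  ext i j
  fin_cases i <;> fin_cases j <;>
    simp [quatMat, Matrix.mul_apply, Fin.sum_univ_four,
      Quaternion.re_mul, Quaternion.imI_mul, Quaternion.imJ_mul, Quaternion.imK_mul] <;>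
    ring

/-- The vector in `Fin 4 → ℝ` corresponding to a quaternion. -/
def toQ (x : Fin 4 → ℝ) : Quaternion ℝ := ⟨x 0, x 1, x 2, x 3⟩

lemma toQ_mulVec (u : Quaternion ℝ) (x : Fin 4 → ℝ) :
    toQ ((quatMat u).mulVec x) = u * toQ x := by
  ext <;>
    simp only [Quaternion.re_mul, Quaternion.imI_mul, Quaternion.imJ_mul, Quaternion.imK_mul] <;>
    simp [toQ, quatMat, Matrix.mulVec, dotProduct, Fin.sum_univ_four] <;>
    ring

lemma matA_eq (θ : ℝ) : matA θ = quatMat ⟨cos θ, sin θ, 0, 0⟩ := by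
  ext i j
  fin_cases i <;> fin_cases j <;> simp [matA, quatMat]

lemma matB_eq (θ : ℝ) : matB θ = quatMat ⟨cos θ, 0, 0, sin θ⟩ := by
  ext i j
  fin_cases i <;> fin_cases j <;> simp [matB, quatMat]

lemma matA_inv_eq (θ : ℝ) : (matA θ)⁻¹ = quatMat ⟨cos θ, -sin θ, 0, 0⟩ := by
  apply Matrix.inv_eq_right_inv
  rw [matA_eq]; erw [← quatMat_mul]
  have : (⟨cos θ, sin θ, 0, 0⟩ * ⟨cos θ, -sin θ, 0, 0⟩ : Quaternion ℝ) = 1 := by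
    set a : Quaternion ℝ := ⟨cos θ, sin θ, 0, 0⟩ with ha
    set b : Quaternion ℝ := ⟨cos θ, -sin θ, 0, 0⟩ with hb
    ext <;>
      simp only [Quaternion.re_mul, Quaternion.imI_mul, Quaternion.imJ_mul, Quaternion.imK_mul, Quaternion.re_one, Quaternion.imI_one, Quaternion.imJ_one, Quaternion.imK_one] <;>
      simp [ha, hb] <;>
      nlinarith [sin_sq_add_cos_sq θ]
  rw [this, quatMat_one]

lemma matB_inv_eq (θ : ℝ) : (matB θ)⁻¹ = quatMat ⟨cos θ, 0, 0, -sin θ⟩ := by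
  apply Matrix.inv_eq_right_inv
  rw [matB_eq]; erw [← quatMat_mul]
  have : (⟨cos θ, 0, 0, sin θ⟩ * ⟨cos θ, 0, 0, -sin θ⟩ : Quaternion ℝ) = 1 := by
    set a : Quaternion ℝ := ⟨cos θ, 0, 0, sin θ⟩ with ha
    set b : Quaternion ℝ := ⟨cos θ, 0, 0, -sin θ⟩ with hb
    ext <;>
      simp only [Quaternion.re_mul, Quaternion.imI_mul, Quaternion.imJ_mul, Quaternion.imK_mul, Quaternion.re_one, Quaternion.imI_one, Quaternion.imJ_one, Quaternion.imK_one] <;>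
      simp [ha, hb] <;>
      nlinarith [sin_sq_add_cos_sq θ]
  rw [this, quatMat_one]

/-- If `cos θ` is transcendental, every element `U ≠ 1` of the group generated by
`A` and `B` has the origin as its only fixed point. -/
theorem stmt_6 (θ : ℝ) (htr : Transcendental ℚ (cos θ))
    (U : Matrix (Fin 4) (Fin 4) ℝ)
    (hU : U ∈ Submonoid.closure ({matA θ, matB θ, (matA θ)⁻¹, (matB θ)⁻¹} :
      Set (Matrix (Fin 4) (Fin 4) ℝ)))
    (hne : U ≠ 1) :
    ∀ x : Fin 4 → ℝ, U.mulVec x = x → x = 0 := by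
  have key : ∀ V ∈ Submonoid.closure ({matA θ, matB θ, (matA θ)⁻¹, (matB θ)⁻¹} :
      Set (Matrix (Fin 4) (Fin 4) ℝ)), ∃ u : Quaternion ℝ, V = quatMat u := by
    intro V hV
    induction hV using Submonoid.closure_induction with
    | mem M hM =>
      rcases hM with h | h | h | h
      · exact ⟨_, h.trans (matA_eq θ)⟩
      · exact ⟨_, h.trans (matB_eq θ)⟩
      · exact ⟨_, h.symm ▸ matA_inv_eq θ⟩
      · exact ⟨_, h.symm ▸ matB_inv_eq θ⟩
    | one => exact ⟨1, quatMat_one.symm⟩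
    | mul M N _ _ ihM ihN =>
      obtain ⟨u, rfl⟩ := ihM
      obtain ⟨v, rfl⟩ := ihN
      exact ⟨u * v, (quatMat_mul u v).symm⟩
  obtain ⟨u, rfl⟩ := key U hU
  intro x hx
  have hu : u ≠ 1 := by
    rintro rfl
    exact hne quatMat_one
  have h1 : u * toQ x = toQ x := by rw [← toQ_mulVec, hx]
  have h2 : (u - 1) * toQ x = 0 := by rw [sub_mul, one_mul, h1, sub_self]
  have h3 : toQ x = 0 := by
    rcases mul_eq_zero.mp h2 with h | h
    · exact absurd (sub_eq_zero.mp h) hu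
    · exact h
  funext i
  fin_cases i
  · exact congrArg QuaternionAlgebra.re h3
  · exact congrArg QuaternionAlgebra.imI h3
  · exact congrArg QuaternionAlgebra.imJ h3
  · exact congrArg QuaternionAlgebra.imK h3
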